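/- Let A = [[0,0,1,0,0],[0,0,0,0,tc],[0,0,0,c,0],[0,0,0,0,s],[0,0,0,0,0]] with c = 1, and s,t > 0 with s²+t²=1 (the case b = 0 of the family). With ξ = [t, −s, 0, t, 0]ᵀ, the five vectors ξ, Aξ, A²ξ, A*²ξ, A*³ξ are linearly independent in ℂ⁵. -/

import Mathlib

open Matrix

theorem independent_orbit_case_b_zero_c_one (s t : ℝ) (hs : 0 < s) (ht : 0 < t)
    (hst : s ^ 2 + t ^ 2 = 1) :
    let A : Matrix (Fin 5) (Fin 5) ℂ :=
      !![0, 0, 1, 0, 0;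
         0, 0, 0, 0, (t : ℂ);
         0, 0, 0, 1, 0;
         0, 0, 0, 0, (s : ℂ);
         0, 0, 0, 0, 0]
    let ξ : Fin 5 → ℂ := ![(t : ℂ), ((-s : ℝ) : ℂ), 0, (t : ℂ), 0]
    LinearIndependent ℂ
      ![ξ, A.mulVec ξ, A.mulVec (A.mulVec ξ),
        Aᴴ.mulVec (Aᴴ.mulVec ξ), Aᴴ.mulVec (Aᴴ.mulVec (Aᴴ.mulVec ξ))] := by
  intro A ξ
  have ht' : (t : ℂ) ≠ 0 := by exact_mod_cast ht.ne'
  have hs' : (s : ℂ) ≠ 0 := by exact_mod_cast hs.ne'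
  have h1 : A.mulVec ξ = ![0, 0, (t : ℂ), 0, 0] := by
    funext j
    fin_cases j <;>
      simp [A, ξ, mulVec, dotProduct, Fin.sum_univ_succ] <;> ring
  have h2 : A.mulVec (A.mulVec ξ) = ![(t : ℂ), 0, 0, 0, 0] := by
    rw [h1]; funext j
    fin_cases j <;> simp [A, mulVec, dotProduct, Fin.sum_univ_succ]
  have h3 : Aᴴ.mulVec ξ = ![0, 0, (t : ℂ), 0, 0] := by
    funext j
    fin_cases j <;>
      simp [A, ξ, mulVec, dotProduct, Fin.sum_univ_succ, conjTranspose_apply] <;> ring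
  have h4 : Aᴴ.mulVec (Aᴴ.mulVec ξ) = ![0, 0, 0, (t : ℂ), 0] := by
    rw [h3]; funext j
    fin_cases j <;>
      simp [A, mulVec, dotProduct, Fin.sum_univ_succ, conjTranspose_apply]
  have h5 : Aᴴ.mulVec (Aᴴ.mulVec (Aᴴ.mulVec ξ)) = ![0, 0, 0, 0, (s : ℂ) * t] := by
    rw [h4]; funext j
    fin_cases j <;>
      simp [A, mulVec, dotProduct, Fin.sum_univ_succ, conjTranspose_apply, mul_comm]
  rw [h2, h1, h5, h4]
  have : (![ξ, ![0, 0, (t:ℂ), 0, 0], ![(t:ℂ), 0, 0, 0, 0],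
      ![0, 0, 0, (t:ℂ), 0], ![0, 0, 0, 0, (s:ℂ)*t]] : Fin 5 → Fin 5 → ℂ)
      = (Matrix.of ![ξ, ![0, 0, (t:ℂ), 0, 0], ![(t:ℂ), 0, 0, 0, 0],
      ![0, 0, 0, (t:ℂ), 0], ![0, 0, 0, 0, (s:ℂ)*t]]).row := rfl
  rw [this, Matrix.linearIndependent_rows_iff_isUnit, Matrix.isUnit_iff_isUnit_det,
    isUnit_iff_ne_zero]
  simp [Matrix.det_succ_row_zero, Fin.sum_univ_succ, ξ, Fin.succAbove]
  exact ⟨hs.ne', ht.ne', hs.ne', ht.ne'⟩
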